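/- Let T = (T_1,…,T_n) be operators on a Hilbert space H, {b_α}_{α∈F_n^+} strictly positive weights with b_{g_0}=1 and sup_α b_α/b_{g_iα} < ∞, W = (W_1,…,W_n) the associated weighted left creation operators on F²(H_n), and D a positive operator on H such that the series ∑_{α∈F_n^+} b_α T_α D T_α* converges in the weak operator topology. Define Ṽ: H → F²(H_n) ⊗ cl(D·H) by Ṽh := ∑_α √b_α e_α ⊗ D^{1/2} T_α* h. Then Ṽ is bounded, satisfies Ṽ T_i* = (W_i* ⊗ I) Ṽ for every i, and Ṽ is an isometry if and only if ∑_α b_α T_α D T_α* = I_H. -/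

import Mathlib

open scoped ENNReal Topology

noncomputable section

/-- Words over the alphabet `Fin n`: elements of the free monoid `F_n^+`. -/
abbrev Word (n : ℕ) := List (Fin n)

/-- The operator `T_α = T_{i₁} ⋯ T_{i_k}` for a word `α = g_{i₁}⋯g_{i_k}` (`T_{g₀} = I`). -/
def opWord {n : ℕ} {H : Type*} [NormedAddCommGroup H] [InnerProductSpace ℂ H]
    (T : Fin n → (H →L[ℂ] H)) (α : Word n) : H →L[ℂ] H := (α.map T).prod

/-- let `T` be a tuple of operators on `H`, `b` strictly positive weights with
`b_{g₀}=1` and `sup_α b_α/b_{g_iα} < ∞`, and `D` a positive operator (with positive square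
root `R`, `R² = D`) such that `∑_α b_α T_α D T_α*` converges in the weak operator topology
to an operator `S`.  Then the map `Ṽ h := ∑_α √b_α e_α ⊗ D^{1/2} T_α* h` (realized here as
an `ℓ²`-family over words, i.e. an element of `F²(H_n) ⊗ H`) is a bounded operator, it
satisfies `Ṽ T_i* = (W_i* ⊗ I) Ṽ` (expressed coordinatewise, since
`(W_i*⊗I)ξ)_α = √(b_α/b_{g_iα}) ξ_{g_iα}`), and `Ṽ` is an isometry iff `S = I`. -/
theorem stmt14 {n : ℕ} {H : Type} [NormedAddCommGroup H] [InnerProductSpace ℂ H]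
    [CompleteSpace H]
    (b : Word n → ℝ) (hbpos : ∀ α, 0 < b α) (hb0 : b [] = 1)
    (hsup : ∀ i : Fin n, ∃ C : ℝ, ∀ α, b α / b (i :: α) ≤ C)
    (T : Fin n → (H →L[ℂ] H))
    (D R : H →L[ℂ] H)
    (hDpos : ∀ x : H, 0 ≤ (inner ℂ x (D x) : ℂ).re)
    (hDsa : ContinuousLinearMap.adjoint D = D)
    (hRsa : ContinuousLinearMap.adjoint R = R)
    (hRpos : ∀ x : H, 0 ≤ (inner ℂ x (R x) : ℂ).re)
    (hR2 : R * R = D)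
    (S : H →L[ℂ] H)
    (hS : ∀ x y : H, Filter.Tendsto (fun N : ℕ =>
        ∑ p ∈ Finset.range (N + 1), ∑ f : Fin p → Fin n,
          (b (List.ofFn f) : ℂ) *
            (inner ℂ (ContinuousLinearMap.adjoint (opWord T (List.ofFn f)) x)
              (D (ContinuousLinearMap.adjoint (opWord T (List.ofFn f)) y)) : ℂ))
      Filter.atTop (𝓝 (inner ℂ x (S y) : ℂ))) :
    ∃ V : H →L[ℂ] (lp (fun _ : Word n => H) 2),
      (∀ (h : H) (α : Word n),
        V h α = (Real.sqrt (b α) : ℂ) • R (ContinuousLinearMap.adjoint (opWord T α) h)) ∧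
      (∀ (i : Fin n) (h : H) (α : Word n),
        V (ContinuousLinearMap.adjoint (T i) h) α =
          (Real.sqrt (b α / b (i :: α)) : ℂ) • (V h (i :: α))) ∧
      ((∀ h : H, ‖V h‖ = ‖h‖) ↔ S = 1) := by
  classical
  set f : H → Word n → H := fun h α =>
    (Real.sqrt (b α) : ℂ) • R (ContinuousLinearMap.adjoint (opWord T α) h) with hf
  -- `⟪u, D u⟫ = ‖R u‖²`
  have hDinner : ∀ u : H, (inner ℂ u (D u) : ℂ) = ((‖R u‖ ^ 2 : ℝ) : ℂ) := by
    intro u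
    have h1 : D u = R (R u) := by rw [← hR2]; rfl
    rw [h1, ← ContinuousLinearMap.adjoint_inner_left R (R u) u, hRsa,
      inner_self_eq_norm_sq_to_K]
    norm_cast
  -- norm of each coordinate squared
  have hnorm : ∀ (h : H) (α : Word n), ‖f h α‖ ^ 2 =
      ((b α : ℂ) * (inner ℂ (ContinuousLinearMap.adjoint (opWord T α) h)
        (D (ContinuousLinearMap.adjoint (opWord T α) h)) : ℂ)).re := by
    intro h α
    rw [hDinner, ← Complex.ofReal_mul, Complex.ofReal_re]
    simp only [hf, norm_smul, Complex.norm_real, mul_pow,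
      Real.norm_eq_abs, sq_abs, Real.sq_sqrt (hbpos α).le]
  -- key HasSum
  have key : ∀ h : H, HasSum (fun α : Word n => ‖f h α‖ ^ 2) ((inner ℂ h (S h) : ℂ)).re := by
    intro h
    set L := ((inner ℂ h (S h) : ℂ)).re with hL
    have htend : Filter.Tendsto (fun N : ℕ => ∑ p ∈ Finset.range N,
        ∑ c : Fin p → Fin n, ‖f h (List.ofFn c)‖ ^ 2) Filter.atTop (𝓝 L) := by
      have h1 := hS h h
      have h2 := (Complex.continuous_re.tendsto _).comp h1
      have h3 : ((fun z : ℂ => z.re) ∘ (fun N : ℕ =>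
          ∑ p ∈ Finset.range (N + 1), ∑ c : Fin p → Fin n,
            (b (List.ofFn c) : ℂ) *
              (inner ℂ (ContinuousLinearMap.adjoint (opWord T (List.ofFn c)) h)
                (D (ContinuousLinearMap.adjoint (opWord T (List.ofFn c)) h)) : ℂ)))
          = fun N : ℕ => ∑ p ∈ Finset.range (N + 1),
              ∑ c : Fin p → Fin n, ‖f h (List.ofFn c)‖ ^ 2 := by
        funext N
        simp only [Function.comp_apply, Complex.re_sum]
        exact Finset.sum_congr rfl fun p _ =>
          Finset.sum_congr rfl fun c _ => (hnorm h _).symm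
      rw [h3] at h2
      exact (Filter.tendsto_add_atTop_iff_nat 1).mp h2
    have hFnn : ∀ p : ℕ, 0 ≤ ∑ c : Fin p → Fin n, ‖f h (List.ofFn c)‖ ^ 2 :=
      fun p => Finset.sum_nonneg fun c _ => sq_nonneg _
    have hF : HasSum (fun p : ℕ => ∑ c : Fin p → Fin n, ‖f h (List.ofFn c)‖ ^ 2) L :=
      (hasSum_iff_tendsto_nat_of_nonneg hFnn L).mpr htend
    -- sigma type
    set g : (Σ p : ℕ, Fin p → Fin n) → ℝ := fun x => ‖f h (List.ofFn x.2)‖ ^ 2 with hg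
    have hgnn : ∀ x, 0 ≤ g x := fun x => sq_nonneg _
    have hgsum : Summable g := by
      rw [summable_sigma_of_nonneg hgnn]
      refine ⟨fun p => summable_of_finite_support (Set.toFinite _), ?_⟩
      have : (fun p : ℕ => ∑' c : Fin p → Fin n, g ⟨p, c⟩)
          = fun p : ℕ => ∑ c : Fin p → Fin n, ‖f h (List.ofFn c)‖ ^ 2 := by
        funext p; exact tsum_fintype _
      rw [this]
      exact hF.summable
    have hgsig : HasSum (fun p : ℕ => ∑ c : Fin p → Fin n, g ⟨p, c⟩) (∑' x, g x) := by
      have := hgsum.hasSum.sigma (fun p => hasSum_fintype (fun c : Fin p → Fin n => g ⟨p, c⟩))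
      exact this
    have hLg : (∑' x, g x) = L := hgsig.unique hF
    have hgL : HasSum g L := hLg ▸ hgsum.hasSum
    -- transfer along the equivalence
    have he : HasSum (g ∘ (List.equivSigmaTuple : Word n ≃ Σ p : ℕ, Fin p → Fin n)) L :=
      ((List.equivSigmaTuple : Word n ≃ Σ p : ℕ, Fin p → Fin n).hasSum_iff).mpr hgL
    have hfun : (g ∘ (List.equivSigmaTuple : Word n ≃ Σ p : ℕ, Fin p → Fin n))
        = fun α : Word n => ‖f h α‖ ^ 2 := by
      funext α
      show ‖f h (List.ofFn α.get)‖ ^ 2 = ‖f h α‖ ^ 2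
      rw [List.ofFn_get]
    rwa [hfun] at he
  -- membership in ℓ²
  have hmem : ∀ h : H, Memℓp (f h) 2 := by
    intro h
    apply memℓp_gen
    have h2 : ∀ α : Word n, ‖f h α‖ ^ ((2 : ℝ≥0∞)).toReal = ‖f h α‖ ^ 2 := by
      intro α
      rw [ENNReal.toReal_ofNat]
      exact Real.rpow_two _ |>.trans rfl
    simpa only [h2] using (key h).summable
  -- the linear map
  let Vlin : H →ₗ[ℂ] lp (fun _ : Word n => H) 2 :=
    { toFun := fun h => ⟨f h, hmem h⟩
      map_add' := by
        intro x y
        apply Subtype.ext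
        funext α
        show f (x + y) α = f x α + f y α
        simp [hf, map_add, smul_add]
      map_smul' := by
        intro c x
        apply Subtype.ext
        funext α
        show f (c • x) α = c • f x α
        simp only [hf, map_smul]
        rw [smul_comm] }
  -- norm identity
  have hVnorm : ∀ h : H,
      ‖(⟨f h, hmem h⟩ : lp (fun _ : Word n => H) 2)‖ ^ 2 = ((inner ℂ h (S h) : ℂ)).re := by
    intro h
    have hp : (0:ℝ) < ((2 : ℝ≥0∞)).toReal := by norm_num
    have h1 := lp.norm_rpow_eq_tsum hp (⟨f h, hmem h⟩ : lp (fun _ : Word n => H) 2)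
    have h2 : ∀ α : Word n, ‖f h α‖ ^ ((2 : ℝ≥0∞)).toReal = ‖f h α‖ ^ 2 := by
      intro α
      rw [ENNReal.toReal_ofNat]
      exact Real.rpow_two _ |>.trans rfl
    have h3 : ‖(⟨f h, hmem h⟩ : lp (fun _ : Word n => H) 2)‖ ^ ((2 : ℝ≥0∞)).toReal
        = ‖(⟨f h, hmem h⟩ : lp (fun _ : Word n => H) 2)‖ ^ 2 := by
      rw [ENNReal.toReal_ofNat]
      exact Real.rpow_two _ |>.trans rfl
    rw [h3] at h1
    simp only [h2] at h1
    rw [h1]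
    exact (key h).tsum_eq
  -- boundedness
  have hbound : ∀ h : H, ‖Vlin h‖ ≤ Real.sqrt ‖S‖ * ‖h‖ := by
    intro h
    have h1 : ‖Vlin h‖ ^ 2 ≤ ‖S‖ * ‖h‖ ^ 2 := by
      have := hVnorm h
      calc ‖Vlin h‖ ^ 2 = ((inner ℂ h (S h) : ℂ)).re := this
        _ ≤ ‖(inner ℂ h (S h) : ℂ)‖ := Complex.re_le_norm _
        _ ≤ ‖h‖ * ‖S h‖ := norm_inner_le_norm _ _
        _ ≤ ‖h‖ * (‖S‖ * ‖h‖) := by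
            have := S.le_opNorm h
            exact mul_le_mul_of_nonneg_left this (norm_nonneg _)
        _ = ‖S‖ * ‖h‖ ^ 2 := by ring
    calc ‖Vlin h‖ = Real.sqrt (‖Vlin h‖ ^ 2) := (Real.sqrt_sq (norm_nonneg _)).symm
      _ ≤ Real.sqrt (‖S‖ * ‖h‖ ^ 2) := Real.sqrt_le_sqrt h1
      _ = Real.sqrt ‖S‖ * ‖h‖ := by
          rw [Real.sqrt_mul (norm_nonneg _), Real.sqrt_sq (norm_nonneg _)]
  let V : H →L[ℂ] lp (fun _ : Word n => H) 2 :=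
    Vlin.mkContinuous (Real.sqrt ‖S‖) hbound
  have hVapp : ∀ (h : H) (α : Word n), V h α = f h α := fun h α => rfl
  refine ⟨V, fun h α => hVapp h α, ?_, ?_⟩
  · -- intertwining
    intro i h α
    rw [hVapp, hVapp]
    have hop : opWord T (i :: α) = (T i).comp (opWord T α) := by
      simp [opWord, List.prod_cons]
      rfl
    have hadj : ContinuousLinearMap.adjoint (opWord T (i :: α)) =
        (ContinuousLinearMap.adjoint (opWord T α)).comp
          (ContinuousLinearMap.adjoint (T i)) := by
      rw [hop, ContinuousLinearMap.adjoint_comp]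
    simp only [hf, hadj, ContinuousLinearMap.comp_apply, smul_smul]
    rw [← Complex.ofReal_mul]
    congr 2
    rw [← Real.sqrt_mul (div_nonneg (hbpos α).le (hbpos (i :: α)).le),
      div_mul_cancel₀ _ (hbpos (i :: α)).ne']
  · -- isometry iff S = 1
    have hVnorm' : ∀ h : H, ‖V h‖ ^ 2 = ((inner ℂ h (S h) : ℂ)).re := fun h => hVnorm h
    have himzero : ∀ h : H, ((inner ℂ h (S h) : ℂ)).im = 0 := by
      intro h
      have h1 := hS h h
      have h2 := (Complex.continuous_im.tendsto _).comp h1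
      have h3 : ((fun z : ℂ => z.im) ∘ (fun N : ℕ =>
          ∑ p ∈ Finset.range (N + 1), ∑ c : Fin p → Fin n,
            (b (List.ofFn c) : ℂ) *
              (inner ℂ (ContinuousLinearMap.adjoint (opWord T (List.ofFn c)) h)
                (D (ContinuousLinearMap.adjoint (opWord T (List.ofFn c)) h)) : ℂ)))
          = fun _ : ℕ => (0:ℝ) := by
        funext N
        simp only [Function.comp_apply, Complex.im_sum]
        refine Finset.sum_eq_zero fun p _ => Finset.sum_eq_zero fun c _ => ?_
        rw [hDinner, ← Complex.ofReal_mul]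
        exact Complex.ofReal_im _
      rw [h3] at h2
      exact (tendsto_nhds_unique tendsto_const_nhds h2).symm
    constructor
    · intro hiso
      have hinner : ∀ h : H, (inner ℂ h (S h) : ℂ) = (inner ℂ h h : ℂ) := by
        intro h
        have hre : ((inner ℂ h (S h) : ℂ)).re = ‖h‖ ^ 2 := by
          rw [← hVnorm' h, hiso h]
        apply Complex.ext
        · rw [hre]
          simp [inner_self_eq_norm_sq_to_K]
          norm_cast
        · rw [himzero h]
          simp [inner_self_eq_norm_sq_to_K]
          norm_cast
      have hzero : ∀ x : H, (inner ℂ (((S : H →ₗ[ℂ] H) - (1 : H →ₗ[ℂ] H)) x) x : ℂ) = 0 := by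
        intro x
        have h1 : (inner ℂ x (((S : H →ₗ[ℂ] H) - 1) x) : ℂ) = 0 := by
          simp only [LinearMap.sub_apply, Module.End.one_apply, inner_sub_right,
            ContinuousLinearMap.coe_coe]
          rw [hinner x]
          ring
        rw [← inner_conj_symm, h1, map_zero]
      have h2 := (inner_map_self_eq_zero ((S : H →ₗ[ℂ] H) - 1)).mp hzero
      have h3 : (S : H →ₗ[ℂ] H) = 1 := by rwa [sub_eq_zero] at h2
      ext x
      have := LinearMap.congr_fun h3 x
      simpa using this
    · intro hSone h
      have h1 : ‖V h‖ ^ 2 = ‖h‖ ^ 2 := by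
        rw [hVnorm' h, hSone]
        simp [inner_self_eq_norm_sq_to_K]
        norm_cast
      have := congrArg Real.sqrt h1
      rwa [Real.sqrt_sq (norm_nonneg _), Real.sqrt_sq (norm_nonneg _)] at this
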